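/- Menelaus' projective formula: let x, y, z, r, s be five lines in general position (no three concurrent, all distinct) in the projective plane. With X = y∩z, Y = z∩x, Z = x∩y, X₀ = x∩r, Y₀ = y∩r, Z₀ = z∩r, X₁ = x∩s, Y₁ = y∩s, Z₁ = z∩s, we have (XY Z₁ Z₀)·(YZ X₁ X₀)·(ZX Y₁ Y₀) = 1. -/

import Mathlib

open Matrix

/-- Points (and, dually, lines) of the real projective plane are represented by
nonzero vectors of `ℝ³`; `dot3` is the incidence pairing. -/
def dot3 (u v : Fin 3 → ℝ) : ℝ := u 0 * v 0 + u 1 * v 1 + u 2 * v 2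

/-- The (projective points represented by) three vectors are collinear: some nonzero
line form vanishes on all of them. -/
def Coll (a b c : Fin 3 → ℝ) : Prop :=
  ∃ l : Fin 3 → ℝ, l ≠ 0 ∧ dot3 l a = 0 ∧ dot3 l b = 0 ∧ dot3 l c = 0

/-- `CRv a b c d k`: the cross ratio `(abcd)` of four collinear projective points
(represented by the given vectors) equals `k`.  Writing `c = x•a + y•b` and
`d = z•a + w•b`, the cross ratio is `(y/x)/(w/z) = (y*z)/(x*w)`; this value is
independent of the chosen representative vectors. -/
def CRv (a b c d : Fin 3 → ℝ) (k : ℝ) : Prop :=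
  ∃ x y z w : ℝ, c = x • a + y • b ∧ d = z • a + w • b ∧ x * w ≠ 0 ∧
    k = (y * z) / (x * w)

/-- Three lines (given by their coefficient vectors) are concurrent: they pass through a
common projective point. -/
def Conc (l m n : Fin 3 → ℝ) : Prop :=
  ∃ P : Fin 3 → ℝ, P ≠ 0 ∧ dot3 l P = 0 ∧ dot3 m P = 0 ∧ dot3 n P = 0

/-! ### Auxiliary material: cross products and determinants in `ℝ³` -/

/-- Cross product of two vectors of `ℝ³`. -/
def cross3 (u v : Fin 3 → ℝ) : Fin 3 → ℝ :=
  ![u 1 * v 2 - u 2 * v 1, u 2 * v 0 - u 0 * v 2, u 0 * v 1 - u 1 * v 0]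

/-- Scalar triple product (determinant of the three rows). -/
def det3 (a b c : Fin 3 → ℝ) : ℝ := dot3 a (cross3 b c)

lemma vec3_ext (u v : Fin 3 → ℝ) (h0 : u 0 = v 0) (h1 : u 1 = v 1) (h2 : u 2 = v 2) :
    u = v := by
  funext i
  fin_cases i
  · exact h0
  · exact h1
  · exact h2

lemma cross3_apply0 (u v : Fin 3 → ℝ) : cross3 u v 0 = u 1 * v 2 - u 2 * v 1 := rfl
lemma cross3_apply1 (u v : Fin 3 → ℝ) : cross3 u v 1 = u 2 * v 0 - u 0 * v 2 := rfl
lemma cross3_apply2 (u v : Fin 3 → ℝ) : cross3 u v 2 = u 0 * v 1 - u 1 * v 0 := rfl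

lemma dot3_cross_eq_det3 (a b c : Fin 3 → ℝ) : dot3 a (cross3 b c) = det3 a b c := rfl

lemma dot3_cross_left (l m : Fin 3 → ℝ) : dot3 l (cross3 l m) = 0 := by
  simp only [dot3, cross3_apply0, cross3_apply1, cross3_apply2]; ring

lemma det3_swap01 (a b c : Fin 3 → ℝ) : det3 b a c = -det3 a b c := by
  simp only [det3, dot3, cross3_apply0, cross3_apply1, cross3_apply2]; ring

lemma conc_of_det3 (l m n : Fin 3 → ℝ) (h : det3 l m n = 0) : Conc l m n := by
  have hdet : (Matrix.of ![l, m, n]).det = 0 := by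
    rw [Matrix.det_fin_three]
    simp only [Matrix.of_apply, Matrix.cons_val', Matrix.cons_val_zero, Matrix.cons_val_one,
      Matrix.head_cons, Matrix.cons_val_two, Matrix.tail_cons, Matrix.head_fin_const,
      Matrix.empty_val', Matrix.cons_val_fin_one]
    simp only [det3, dot3, cross3_apply0, cross3_apply1, cross3_apply2] at h
    linarith [h]
  obtain ⟨v, hv, hMv⟩ := (Matrix.exists_mulVec_eq_zero_iff).2 hdet
  refine ⟨v, hv, ?_, ?_, ?_⟩
  · have h0 := congrFun hMv 0
    simp [Matrix.mulVec, dotProduct, Fin.sum_univ_three] at h0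
    simpa [dot3] using h0
  · have h1 := congrFun hMv 1
    simp [Matrix.mulVec, dotProduct, Fin.sum_univ_three] at h1
    simpa [dot3] using h1
  · have h2 := congrFun hMv 2
    simp [Matrix.mulVec, dotProduct, Fin.sum_univ_three] at h2
    simpa [dot3] using h2

lemma conc_rot (a b c : Fin 3 → ℝ) (h : Conc a b c) : Conc b c a := by
  obtain ⟨P, hP, h1, h2, h3⟩ := h
  exact ⟨P, hP, h2, h3, h1⟩

lemma conc_swap01 (a b c : Fin 3 → ℝ) (h : Conc a b c) : Conc b a c := by
  obtain ⟨P, hP, h1, h2, h3⟩ := h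
  exact ⟨P, hP, h2, h1, h3⟩

lemma conc_swap12 (a b c : Fin 3 → ℝ) (h : Conc a b c) : Conc a c b := by
  obtain ⟨P, hP, h1, h2, h3⟩ := h
  exact ⟨P, hP, h1, h3, h2⟩

lemma cross3_ne_of_not_conc (l m n : Fin 3 → ℝ) (h : ¬Conc l m n) : cross3 l m ≠ 0 := by
  intro h0
  apply h
  have hd : det3 n l m = 0 := by
    rw [det3, h0]; simp [dot3]
  exact conc_rot _ _ _ (conc_of_det3 n l m hd)

lemma rep_cross (l m P : Fin 3 → ℝ) (hc : cross3 l m ≠ 0) (hP : P ≠ 0)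
    (hl : dot3 l P = 0) (hm : dot3 m P = 0) :
    ∃ t : ℝ, t ≠ 0 ∧ P = t • cross3 l m := by
  set c := cross3 l m with hc'
  simp only [dot3] at hl hm
  have e0 : c 0 = l 1 * m 2 - l 2 * m 1 := rfl
  have e1 : c 1 = l 2 * m 0 - l 0 * m 2 := rfl
  have e2 : c 2 = l 0 * m 1 - l 1 * m 0 := rfl
  have h01 : P 0 * c 1 = P 1 * c 0 := by
    rw [e0, e1]; linear_combination l 2 * hm - m 2 * hl
  have h02 : P 0 * c 2 = P 2 * c 0 := by
    rw [e0, e2]; linear_combination m 1 * hl - l 1 * hm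
  have h12 : P 1 * c 2 = P 2 * c 1 := by
    rw [e1, e2]; linear_combination l 0 * hm - m 0 * hl
  have hdiv : ∀ pi pj ci cj : ℝ, cj ≠ 0 → pi * cj = pj * ci → pi = pj / cj * ci := by
    intro pi pj ci cj hcj h
    field_simp
    linear_combination h
  have hnz : c 0 ≠ 0 ∨ c 1 ≠ 0 ∨ c 2 ≠ 0 := by
    by_contra h
    push_neg at h
    exact hc (vec3_ext _ _ (by simpa using h.1) (by simpa using h.2.1) (by simpa using h.2.2))
  have key : ∃ t : ℝ, P = t • c := by
    rcases hnz with h | h | h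
    · refine ⟨P 0 / c 0, vec3_ext _ _ ?_ ?_ ?_⟩ <;> simp only [Pi.smul_apply, smul_eq_mul]
      · exact hdiv _ _ _ _ h (by ring)
      · exact hdiv _ _ _ _ h (by linear_combination -h01)
      · exact hdiv _ _ _ _ h (by linear_combination -h02)
    · refine ⟨P 1 / c 1, vec3_ext _ _ ?_ ?_ ?_⟩ <;> simp only [Pi.smul_apply, smul_eq_mul]
      · exact hdiv _ _ _ _ h (by linear_combination h01)
      · exact hdiv _ _ _ _ h (by ring)
      · exact hdiv _ _ _ _ h (by linear_combination -h12)
    · refine ⟨P 2 / c 2, vec3_ext _ _ ?_ ?_ ?_⟩ <;> simp only [Pi.smul_apply, smul_eq_mul]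
      · exact hdiv _ _ _ _ h (by linear_combination h02)
      · exact hdiv _ _ _ _ h (by linear_combination h12)
      · exact hdiv _ _ _ _ h (by ring)
  obtain ⟨t, ht⟩ := key
  refine ⟨t, ?_, ht⟩
  intro h0
  exact hP (by rw [ht, h0, zero_smul])

lemma expand3 (x y z v : Fin 3 → ℝ) (hD : det3 x y z ≠ 0) :
    v = (dot3 x v / det3 x y z) • cross3 y z + (dot3 y v / det3 x y z) • cross3 z x
      + (dot3 z v / det3 x y z) • cross3 x y := by
  have k0 : det3 x y z * v 0 =
      dot3 x v * cross3 y z 0 + dot3 y v * cross3 z x 0 + dot3 z v * cross3 x y 0 := by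
    simp only [det3, dot3, cross3_apply0, cross3_apply1, cross3_apply2]; ring
  have k1 : det3 x y z * v 1 =
      dot3 x v * cross3 y z 1 + dot3 y v * cross3 z x 1 + dot3 z v * cross3 x y 1 := by
    simp only [det3, dot3, cross3_apply0, cross3_apply1, cross3_apply2]; ring
  have k2 : det3 x y z * v 2 =
      dot3 x v * cross3 y z 2 + dot3 y v * cross3 z x 2 + dot3 z v * cross3 x y 2 := by
    simp only [det3, dot3, cross3_apply0, cross3_apply1, cross3_apply2]; ring
  refine vec3_ext _ _ ?_ ?_ ?_ <;>
    simp only [Pi.add_apply, Pi.smul_apply, smul_eq_mul, div_mul_eq_mul_div,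
      ← add_div, eq_div_iff hD]
  · linear_combination k0
  · linear_combination k1
  · linear_combination k2

set_option maxHeartbeats 2000000 in
/-- Menelaus' projective formula: for five lines `x, y, z, r, s` in general position
(no three concurrent), with `X = y∩z`, `Y = z∩x`, `Z = x∩y`, `X₀ = x∩r`, `Y₀ = y∩r`,
`Z₀ = z∩r`, `X₁ = x∩s`, `Y₁ = y∩s`, `Z₁ = z∩s`, one has
`(XY Z₁ Z₀)·(YZ X₁ X₀)·(ZX Y₁ Y₀) = 1`. -/
theorem menelaus_projective (x y z r s : Fin 3 → ℝ)
    (hxyz : ¬Conc x y z) (hxyr : ¬Conc x y r) (hxys : ¬Conc x y s)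
    (hxzr : ¬Conc x z r) (hxzs : ¬Conc x z s) (hxrs : ¬Conc x r s)
    (hyzr : ¬Conc y z r) (hyzs : ¬Conc y z s) (hyrs : ¬Conc y r s)
    (hzrs : ¬Conc z r s)
    (X Y Z X0 Y0 Z0 X1 Y1 Z1 : Fin 3 → ℝ)
    (hX : X ≠ 0) (hXy : dot3 y X = 0) (hXz : dot3 z X = 0)
    (hY : Y ≠ 0) (hYz : dot3 z Y = 0) (hYx : dot3 x Y = 0)
    (hZ : Z ≠ 0) (hZx : dot3 x Z = 0) (hZy : dot3 y Z = 0)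
    (hX0 : X0 ≠ 0) (hX0x : dot3 x X0 = 0) (hX0r : dot3 r X0 = 0)
    (hY0 : Y0 ≠ 0) (hY0y : dot3 y Y0 = 0) (hY0r : dot3 r Y0 = 0)
    (hZ0 : Z0 ≠ 0) (hZ0z : dot3 z Z0 = 0) (hZ0r : dot3 r Z0 = 0)
    (hX1 : X1 ≠ 0) (hX1x : dot3 x X1 = 0) (hX1s : dot3 s X1 = 0)
    (hY1 : Y1 ≠ 0) (hY1y : dot3 y Y1 = 0) (hY1s : dot3 s Y1 = 0)
    (hZ1 : Z1 ≠ 0) (hZ1z : dot3 z Z1 = 0) (hZ1s : dot3 s Z1 = 0) :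
    ∃ k1 k2 k3 : ℝ, CRv X Y Z1 Z0 k1 ∧ CRv Y Z X1 X0 k2 ∧ CRv Z X Y1 Y0 k3 ∧
      k1 * k2 * k3 = 1 := by
  -- nonzero cross products
  have hcyz : cross3 y z ≠ 0 := cross3_ne_of_not_conc y z r hyzr
  have hczx : cross3 z x ≠ 0 := cross3_ne_of_not_conc z x r (fun h => hxzr (conc_swap01 _ _ _ h))
  have hcxy : cross3 x y ≠ 0 := cross3_ne_of_not_conc x y z hxyz
  have hczs : cross3 z s ≠ 0 := cross3_ne_of_not_conc z s r (fun h => hzrs (conc_swap12 _ _ _ h))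
  have hczr : cross3 z r ≠ 0 := cross3_ne_of_not_conc z r s hzrs
  have hcxs : cross3 x s ≠ 0 := cross3_ne_of_not_conc x s r (fun h => hxrs (conc_swap12 _ _ _ h))
  have hcxr : cross3 x r ≠ 0 := cross3_ne_of_not_conc x r s hxrs
  have hcys : cross3 y s ≠ 0 := cross3_ne_of_not_conc y s r (fun h => hyrs (conc_swap12 _ _ _ h))
  have hcyr : cross3 y r ≠ 0 := cross3_ne_of_not_conc y r s hyrs
  -- representations of all nine points as multiples of cross products
  obtain ⟨t1, ht1, hXe⟩ := rep_cross y z X hcyz hX hXy hXz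
  obtain ⟨t2, ht2, hYe⟩ := rep_cross z x Y hczx hY hYz hYx
  obtain ⟨t3, ht3, hZe⟩ := rep_cross x y Z hcxy hZ hZx hZy
  obtain ⟨t4, ht4, hZ1e⟩ := rep_cross z s Z1 hczs hZ1 hZ1z hZ1s
  obtain ⟨t5, ht5, hZ0e⟩ := rep_cross z r Z0 hczr hZ0 hZ0z hZ0r
  obtain ⟨t6, ht6, hX1e⟩ := rep_cross x s X1 hcxs hX1 hX1x hX1s
  obtain ⟨t7, ht7, hX0e⟩ := rep_cross x r X0 hcxr hX0 hX0x hX0r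
  obtain ⟨t8, ht8, hY1e⟩ := rep_cross y s Y1 hcys hY1 hY1y hY1s
  obtain ⟨t9, ht9, hY0e⟩ := rep_cross y r Y0 hcyr hY0 hY0y hY0r
  -- nonzero determinants
  have hD : det3 x y z ≠ 0 := fun h => hxyz (conc_of_det3 x y z h)
  have dxys : det3 x y s ≠ 0 := fun h => hxys (conc_of_det3 x y s h)
  have dxzs : det3 x z s ≠ 0 := fun h => hxzs (conc_of_det3 x z s h)
  have dyzs : det3 y z s ≠ 0 := fun h => hyzs (conc_of_det3 y z s h)
  have dxyr : det3 x y r ≠ 0 := fun h => hxyr (conc_of_det3 x y r h)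
  have dxzr : det3 x z r ≠ 0 := fun h => hxzr (conc_of_det3 x z r h)
  have dyzr : det3 y z r ≠ 0 := fun h => hyzr (conc_of_det3 y z r h)
  set D := det3 x y z with hDdef
  -- coefficients
  set x₁ := t4 * det3 x z s / (D * t1) with hx₁
  set y₁ := t4 * det3 y z s / (D * t2) with hy₁
  set z₁ := t5 * det3 x z r / (D * t1) with hz₁
  set w₁ := t5 * det3 y z r / (D * t2) with hw₁
  set x₂ := t6 * -det3 x y s / (D * t2) with hx₂
  set y₂ := t6 * -det3 x z s / (D * t3) with hy₂
  set z₂ := t7 * -det3 x y r / (D * t2) with hz₂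
  set w₂ := t7 * -det3 x z r / (D * t3) with hw₂
  set x₃ := t8 * -det3 y z s / (D * t3) with hx₃
  set y₃ := t8 * det3 x y s / (D * t1) with hy₃
  set z₃ := t9 * -det3 y z r / (D * t3) with hz₃
  set w₃ := t9 * det3 x y r / (D * t1) with hw₃
  have hDt1 : D * t1 ≠ 0 := mul_ne_zero hD ht1
  have hDt2 : D * t2 ≠ 0 := mul_ne_zero hD ht2
  have hDt3 : D * t3 ≠ 0 := mul_ne_zero hD ht3
  -- the six vector equations
  have eZ1 : Z1 = x₁ • X + y₁ • Y := by
    rw [hZ1e, hXe, hYe, expand3 x y z (cross3 z s) hD, dot3_cross_left z s]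
    simp only [dot3_cross_eq_det3, hx₁, hy₁, ← hDdef]
    match_scalars <;> field_simp <;> ring
  have eZ0 : Z0 = z₁ • X + w₁ • Y := by
    rw [hZ0e, hXe, hYe, expand3 x y z (cross3 z r) hD, dot3_cross_left z r]
    simp only [dot3_cross_eq_det3, hz₁, hw₁, ← hDdef]
    match_scalars <;> field_simp <;> ring
  have eX1 : X1 = x₂ • Y + y₂ • Z := by
    rw [hX1e, hYe, hZe, expand3 x y z (cross3 x s) hD, dot3_cross_left x s]
    simp only [dot3_cross_eq_det3, det3_swap01 x y s, det3_swap01 x z s, hx₂, hy₂, ← hDdef]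
    match_scalars <;> field_simp <;> ring
  have eX0 : X0 = z₂ • Y + w₂ • Z := by
    rw [hX0e, hYe, hZe, expand3 x y z (cross3 x r) hD, dot3_cross_left x r]
    simp only [dot3_cross_eq_det3, det3_swap01 x y r, det3_swap01 x z r, hz₂, hw₂, ← hDdef]
    match_scalars <;> field_simp <;> ring
  have eY1 : Y1 = x₃ • Z + y₃ • X := by
    rw [hY1e, hZe, hXe, expand3 x y z (cross3 y s) hD, dot3_cross_left y s]
    simp only [dot3_cross_eq_det3, det3_swap01 y z s, hx₃, hy₃, ← hDdef]
    match_scalars <;> field_simp <;> ring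
  have eY0 : Y0 = z₃ • Z + w₃ • X := by
    rw [hY0e, hZe, hXe, expand3 x y z (cross3 y r) hD, dot3_cross_left y r]
    simp only [dot3_cross_eq_det3, det3_swap01 y z r, hz₃, hw₃, ← hDdef]
    match_scalars <;> field_simp <;> ring
  -- nonvanishing of denominators
  have hx₁0 : x₁ ≠ 0 := div_ne_zero (mul_ne_zero ht4 dxzs) hDt1
  have hw₁0 : w₁ ≠ 0 := div_ne_zero (mul_ne_zero ht5 dyzr) hDt2
  have hy₁0 : y₁ ≠ 0 := div_ne_zero (mul_ne_zero ht4 dyzs) hDt2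
  have hz₁0 : z₁ ≠ 0 := div_ne_zero (mul_ne_zero ht5 dxzr) hDt1
  have hx₂0 : x₂ ≠ 0 := div_ne_zero (mul_ne_zero ht6 (neg_ne_zero.mpr dxys)) hDt2
  have hw₂0 : w₂ ≠ 0 := div_ne_zero (mul_ne_zero ht7 (neg_ne_zero.mpr dxzr)) hDt3
  have hy₂0 : y₂ ≠ 0 := div_ne_zero (mul_ne_zero ht6 (neg_ne_zero.mpr dxzs)) hDt3
  have hz₂0 : z₂ ≠ 0 := div_ne_zero (mul_ne_zero ht7 (neg_ne_zero.mpr dxyr)) hDt2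
  have hx₃0 : x₃ ≠ 0 := div_ne_zero (mul_ne_zero ht8 (neg_ne_zero.mpr dyzs)) hDt3
  have hw₃0 : w₃ ≠ 0 := div_ne_zero (mul_ne_zero ht9 dxyr) hDt1
  have hy₃0 : y₃ ≠ 0 := div_ne_zero (mul_ne_zero ht8 dxys) hDt1
  have hz₃0 : z₃ ≠ 0 := div_ne_zero (mul_ne_zero ht9 (neg_ne_zero.mpr dyzr)) hDt3
  refine ⟨(y₁ * z₁) / (x₁ * w₁), (y₂ * z₂) / (x₂ * w₂), (y₃ * z₃) / (x₃ * w₃),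
    ⟨x₁, y₁, z₁, w₁, eZ1, eZ0, mul_ne_zero hx₁0 hw₁0, rfl⟩,
    ⟨x₂, y₂, z₂, w₂, eX1, eX0, mul_ne_zero hx₂0 hw₂0, rfl⟩,
    ⟨x₃, y₃, z₃, w₃, eY1, eY0, mul_ne_zero hx₃0 hw₃0, rfl⟩, ?_⟩
  rw [hx₁, hy₁, hz₁, hw₁, hx₂, hy₂, hz₂, hw₂, hx₃, hy₃, hz₃, hw₃]
  field_simp
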